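/- Let φ*(v) = ψ(conj(v)), with ψ : D → ℋ analytic, satisfy N_v* φ*(v) = conj(z(v)) φ*(v) for all v ∈ D and ⟨φ*(0), φ(0)⟩ ≠ 0. Then for every integer k ≥ 1 the following are equivalent: (1) the vectors W φ^(j)(0) for 0 ≤ j ≤ k−2 are orthogonal to ker(N₀* − conj(z₀)) (the eigenpath φ has order at least k at 0); (2) the vectors W ψ^(j)(0) for 0 ≤ j ≤ k−2 are orthogonal to some vector χ ∈ ker(N₀ − z₀) with ⟨ψ(0), χ⟩ ≠ 0; (3) the vectors W ψ^(j)(0) for 0 ≤ j ≤ k−2 are orthogonal to ker(N₀ − z₀) (the conjugate eigenpath φ* has order at least k at 0); (4) z^(j)(0) = 0 for j = 1, …, k−1; (5) (N₀* − conj(z₀)) ψ^(j)(0) = −j W ψ^(j−1)(0) for j = 1, …, k−1. -/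

import Mathlib

section AuxEigenpathTFAE
open Metric Finset
open Metric Finset
variable {H : Type*} [NormedAddCommGroup H] [NormedSpace ℂ H] [CompleteSpace H]

lemma aux_hasDerivAt_iteratedDeriv {ρ : ℝ} {f : ℂ → H}
    (hf : AnalyticOnNhd ℂ f (ball 0 ρ)) (n : ℕ) {v : ℂ} (hv : v ∈ ball (0:ℂ) ρ) :
    HasDerivAt (iteratedDeriv n f) (iteratedDeriv (n+1) f v) v := by
  have h1 : AnalyticOnNhd ℂ (iteratedDeriv n f) (ball 0 ρ) := by
    rw [iteratedDeriv_eq_iterate]; exact hf.iterated_deriv n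
  have h2 := ((h1 v hv).differentiableAt).hasDerivAt
  rwa [← iteratedDeriv_succ] at h2
lemma aux_rec {ρ : ℝ} (A W : H →L[ℂ] H) {z : ℂ → ℂ} {φ : ℂ → H}
    (hz : AnalyticOnNhd ℂ z (ball 0 ρ)) (hφ : AnalyticOnNhd ℂ φ (ball 0 ρ))
    (heq : ∀ v ∈ ball (0:ℂ) ρ, A (φ v) + v • W (φ v) = z v • φ v) :
    ∀ n : ℕ, ∀ v ∈ ball (0:ℂ) ρ,
      A (iteratedDeriv n φ v) + v • W (iteratedDeriv n φ v)
        + (n:ℂ) • W (iteratedDeriv (n-1) φ v)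
      = ∑ i ∈ Finset.range (n+1),
          (n.choose i : ℂ) • (iteratedDeriv i z v • iteratedDeriv (n-i) φ v) := by
  intro n
  induction n with
  | zero => intro v hv; simpa using heq v hv
  | succ n IH =>
    intro v hv
    have hDφ : ∀ m, HasDerivAt (iteratedDeriv m φ) (iteratedDeriv (m+1) φ v) v :=
      fun m => aux_hasDerivAt_iteratedDeriv hφ m hv
    have hDz : ∀ m, HasDerivAt (iteratedDeriv m z) (iteratedDeriv (m+1) z v) v :=
      fun m => aux_hasDerivAt_iteratedDeriv hz m hv
    have hFd : HasDerivAt (fun w => A (iteratedDeriv n φ w) + w • W (iteratedDeriv n φ w)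
        + (n:ℂ) • W (iteratedDeriv (n-1) φ w))
        (A (iteratedDeriv (n+1) φ v)
          + (v • W (iteratedDeriv (n+1) φ v) + (1:ℂ) • W (iteratedDeriv n φ v))
          + (n:ℂ) • W (iteratedDeriv (n-1+1) φ v)) v := by
        exact ((A.hasFDerivAt.comp_hasDerivAt v (hDφ n)).add
          ((hasDerivAt_id v).smul (W.hasFDerivAt.comp_hasDerivAt v (hDφ n)))).add
          ((W.hasFDerivAt.comp_hasDerivAt v (hDφ (n-1))).const_smul (n:ℂ))
    have hGd : HasDerivAt (fun w => ∑ i ∈ Finset.range (n+1),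
          (n.choose i : ℂ) • (iteratedDeriv i z w • iteratedDeriv (n-i) φ w))
        (∑ i ∈ Finset.range (n+1), (n.choose i : ℂ) •
          (iteratedDeriv i z v • iteratedDeriv (n-i+1) φ v
            + iteratedDeriv (i+1) z v • iteratedDeriv (n-i) φ v)) v :=
      HasDerivAt.fun_sum fun i _ => ((hDz i).smul (hDφ (n-i))).const_smul _
    have hEE : (fun w => A (iteratedDeriv n φ w) + w • W (iteratedDeriv n φ w)
        + (n:ℂ) • W (iteratedDeriv (n-1) φ w)) =ᶠ[nhds v] (fun w => ∑ i ∈ Finset.range (n+1),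
          (n.choose i : ℂ) • (iteratedDeriv i z w • iteratedDeriv (n-i) φ w)) :=
      (isOpen_ball.eventually_mem hv).mono fun w hw => IH w hw
    have key := hFd.unique (hGd.congr_of_eventuallyEq hEE)
    -- now algebra
    have hW1 : (1:ℂ) • W (iteratedDeriv n φ v) + (n:ℂ) • W (iteratedDeriv (n-1+1) φ v)
        = ((n+1 : ℕ):ℂ) • W (iteratedDeriv n φ v) := by
      rcases n with _ | m
      · simp
      · simp only [Nat.succ_sub_one]
        push_cast
        module
    have hsum : ∑ i ∈ Finset.range (n+2), (((n+1).choose i : ℕ):ℂ) •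
          (iteratedDeriv i z v • iteratedDeriv (n+1-i) φ v)
        = ∑ i ∈ Finset.range (n+1), (n.choose i : ℂ) •
          (iteratedDeriv i z v • iteratedDeriv (n-i+1) φ v
            + iteratedDeriv (i+1) z v • iteratedDeriv (n-i) φ v) := by
      have hY : ∀ i ∈ Finset.range (n+1), (n.choose i : ℂ) •
            (iteratedDeriv i z v • iteratedDeriv (n-i+1) φ v)
          = (n.choose i : ℂ) • (iteratedDeriv i z v • iteratedDeriv (n+1-i) φ v) := by
        intro i hi
        rw [Finset.mem_range] at hi
        congr 3
        omega
      rw [Finset.sum_range_succ']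
      simp only [Nat.choose_succ_succ, Nat.cast_add, add_smul, Nat.add_sub_cancel_left]
      rw [Finset.sum_add_distrib]
      have h2 : (∑ i ∈ Finset.range (n+1), ((n.choose (i+1) : ℕ):ℂ) •
            (iteratedDeriv (i+1) z v • iteratedDeriv (n-i) φ v))
          + (((n+1).choose 0 : ℕ):ℂ) • (iteratedDeriv 0 z v • iteratedDeriv (n+1-0) φ v)
          = ∑ i ∈ Finset.range (n+1), (n.choose i : ℂ) •
            (iteratedDeriv i z v • iteratedDeriv (n+1-i) φ v) := by
        have := Finset.sum_range_succ' (fun i => ((n.choose i : ℕ):ℂ) •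
          (iteratedDeriv i z v • iteratedDeriv (n+1-i) φ v)) (n+1)
        rw [Finset.sum_range_succ] at this
        simp only [Nat.choose_succ_self, Nat.cast_zero, zero_smul, add_zero] at this
        rw [this]
        congr 1
        · apply Finset.sum_congr rfl
          intro i hi
          rw [Finset.mem_range] at hi
          congr 3
          omega
        · norm_num
      calc _ = ((∑ i ∈ Finset.range (n+1), ((n.choose (i+1) : ℕ):ℂ) •
            (iteratedDeriv (i+1) z v • iteratedDeriv (n-i) φ v))
          + (((n+1).choose 0 : ℕ):ℂ) • (iteratedDeriv 0 z v • iteratedDeriv (n+1-0) φ v))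
          + (∑ i ∈ Finset.range (n+1), ((n.choose i : ℕ):ℂ) •
            (iteratedDeriv (i+1) z v • iteratedDeriv (n-i) φ v)) := by
            have : ∀ i, n + 1 - (i+1) = n - i := fun i => by omega
            simp only [this]
            abel
        _ = _ := by
          rw [h2, ← Finset.sum_add_distrib]
          apply Finset.sum_congr rfl
          intro i hi
          rw [smul_add, hY i hi]
      
    rw [show (n+1:ℕ) - 1 = n from rfl]
    calc A (iteratedDeriv (n+1) φ v) + v • W (iteratedDeriv (n+1) φ v)
          + ((n+1:ℕ):ℂ) • W (iteratedDeriv n φ v)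
        = A (iteratedDeriv (n+1) φ v)
          + (v • W (iteratedDeriv (n+1) φ v) + (1:ℂ) • W (iteratedDeriv n φ v))
          + (n:ℂ) • W (iteratedDeriv (n-1+1) φ v) := by
            rw [← hW1]
            abel
      _ = _ := by
            rw [key, ← hsum]

lemma aux_conj_hasDerivAt {h : ℂ → ℂ} {d w : ℂ}
    (hd : HasDerivAt h d ((starRingEnd ℂ) w)) :
    HasDerivAt (fun x => (starRingEnd ℂ) (h ((starRingEnd ℂ) x))) ((starRingEnd ℂ) d) w := by
  have h2 : HasFDerivAt h (((1 : ℂ →L[ℂ] ℂ).smulRight d).restrictScalars ℝ) ((starRingEnd ℂ) w) :=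
    hd.hasFDerivAt.restrictScalars ℝ
  have hc1 : HasFDerivAt (fun x : ℂ => (starRingEnd ℂ) x)
      (Complex.conjCLE.toContinuousLinearMap) w := Complex.conjCLE.hasFDerivAt
  have hc2 : HasFDerivAt (fun x : ℂ => (starRingEnd ℂ) x)
      (Complex.conjCLE.toContinuousLinearMap) (h ((starRingEnd ℂ) w)) := Complex.conjCLE.hasFDerivAt
  have hcomp := hc2.comp w (h2.comp w hc1)
  have hfd : HasFDerivAt (fun x => (starRingEnd ℂ) (h ((starRingEnd ℂ) x)))
      ((1 : ℂ →L[ℂ] ℂ).smulRight ((starRingEnd ℂ) d)) w := by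
    apply hasFDerivAt_of_restrictScalars ℝ hcomp
    ext x
    simp [Complex.conjCLE_apply, mul_comm]
  simpa using hfd.hasDerivAt

lemma aux_conj_mem {ρ : ℝ} {w : ℂ} (hw : w ∈ ball (0:ℂ) ρ) : (starRingEnd ℂ) w ∈ ball (0:ℂ) ρ := by
  rw [mem_ball_zero_iff] at hw ⊢
  simpa using hw

lemma aux_conj_analytic {ρ : ℝ} {z : ℂ → ℂ} (hz : AnalyticOnNhd ℂ z (ball 0 ρ)) :
    AnalyticOnNhd ℂ (fun w => (starRingEnd ℂ) (z ((starRingEnd ℂ) w))) (ball 0 ρ) := by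
  apply DifferentiableOn.analyticOnNhd _ isOpen_ball
  intro w hw
  exact (aux_conj_hasDerivAt ((hz _ (aux_conj_mem hw)).differentiableAt.hasDerivAt)).differentiableAt.differentiableWithinAt

lemma aux_conj_iteratedDeriv {ρ : ℝ} {z : ℂ → ℂ} (hz : AnalyticOnNhd ℂ z (ball 0 ρ)) :
    ∀ n : ℕ, ∀ w ∈ ball (0:ℂ) ρ,
      iteratedDeriv n (fun x => (starRingEnd ℂ) (z ((starRingEnd ℂ) x))) w
        = (starRingEnd ℂ) (iteratedDeriv n z ((starRingEnd ℂ) w)) := by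
  intro n
  induction n with
  | zero => intro w hw; simp
  | succ n IH =>
    intro w hw
    rw [iteratedDeriv_succ]
    have hEE : iteratedDeriv n (fun x => (starRingEnd ℂ) (z ((starRingEnd ℂ) x)))
        =ᶠ[nhds w] (fun x => (starRingEnd ℂ) (iteratedDeriv n z ((starRingEnd ℂ) x))) :=
      (isOpen_ball.eventually_mem hw).mono fun x hx => IH x hx
    rw [hEE.deriv_eq]
    exact (aux_conj_hasDerivAt (aux_hasDerivAt_iteratedDeriv hz n (aux_conj_mem hw))).deriv

lemma aux_sum_single {M : Type*} [AddCommGroup M] [Module ℂ M] (n : ℕ) (g : ℕ → ℂ) (f : ℕ → M)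
    (hg : ∀ i, 1 ≤ i → i ≤ n → g i = 0) :
    ∑ i ∈ Finset.range (n+1), (n.choose i : ℂ) • (g i • f i) = g 0 • f 0 := by
  rw [Finset.sum_eq_single 0]
  · simp
  · intro i hi hi0
    rw [Finset.mem_range] at hi
    rw [hg i (Nat.one_le_iff_ne_zero.mpr hi0) (by omega), zero_smul, smul_zero]
  · intro h; exact absurd (Finset.mem_range.mpr (by omega)) h

lemma aux_sum_peel {M : Type*} [AddCommGroup M] [Module ℂ M] (n : ℕ) (hn : 1 ≤ n)
    (g : ℕ → ℂ) (f : ℕ → M) (hg : ∀ i, 1 ≤ i → i < n → g i = 0) :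
    ∑ i ∈ Finset.range (n+1), (n.choose i : ℂ) • (g i • f i) = g 0 • f 0 + g n • f n := by
  rw [Finset.sum_range_succ, Finset.sum_eq_single 0]
  · simp [add_comm]
  · intro i hi hi0
    rw [Finset.mem_range] at hi
    rw [hg i (Nat.one_le_iff_ne_zero.mpr hi0) hi, zero_smul, smul_zero]
  · intro h; exact absurd (Finset.mem_range.mpr (by omega)) h

end AuxEigenpathTFAE


open ContinuousLinearMap
open scoped InnerProductSpace

/-- equivalences between the order of an eigenpath `φ` of `N_v = N₀ + vW`
and the order of a conjugate eigenpath `φ*(v) = ψ(conj v)` of `N_v*` at `v = 0`. -/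
theorem eigenpath_and_conjugate_eigenpath_order_tfae
    {H : Type*} [NormedAddCommGroup H] [InnerProductSpace ℂ H] [CompleteSpace H]
    (N₀ W : H →L[ℂ] H) (hW : IsSelfAdjoint W)
    (ρ : ℝ) (hρ : 0 < ρ)
    (z : ℂ → ℂ) (φ : ℂ → H)
    (hz : AnalyticOnNhd ℂ z (Metric.ball (0 : ℂ) ρ))
    (hφ : AnalyticOnNhd ℂ φ (Metric.ball (0 : ℂ) ρ))
    (heig : ∀ v ∈ Metric.ball (0 : ℂ) ρ, (N₀ + v • W) (φ v) = z v • φ v)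
    (hφ0 : φ 0 ≠ 0)
    (z₀ : ℂ) (hz₀ : z₀ = z 0)
    -- the conjugate eigenpath `φ*(v) = ψ(conj v)` with `ψ` analytic
    (ψ : ℂ → H) (hψ : AnalyticOnNhd ℂ ψ (Metric.ball (0 : ℂ) ρ))
    (heigψ : ∀ v ∈ Metric.ball (0 : ℂ) ρ,
      adjoint (N₀ + v • W) (ψ ((starRingEnd ℂ) v)) =
        (starRingEnd ℂ) (z v) • ψ ((starRingEnd ℂ) v))
    (hpair : ⟪ψ 0, φ 0⟫_ℂ ≠ 0)
    (k : ℕ) (hk : 1 ≤ k) :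
    [ -- (1) `φ` has order at least `k` at `0`
      ∀ j : ℕ, j + 2 ≤ k → ∀ χ : H, adjoint N₀ χ = (starRingEnd ℂ) z₀ • χ →
        ⟪χ, W (iteratedDeriv j φ 0)⟫_ℂ = 0,
      -- (2) `W ψ^(j)(0)` orthogonal to some eigenvector `χ` with `⟪ψ 0, χ⟫ ≠ 0`
      ∃ χ : H, N₀ χ = z₀ • χ ∧ ⟪ψ 0, χ⟫_ℂ ≠ 0 ∧
        ∀ j : ℕ, j + 2 ≤ k → ⟪W (iteratedDeriv j ψ 0), χ⟫_ℂ = 0,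
      -- (3) `φ*` has order at least `k` at `0`
      ∀ j : ℕ, j + 2 ≤ k → ∀ χ : H, N₀ χ = z₀ • χ →
        ⟪W (iteratedDeriv j ψ 0), χ⟫_ℂ = 0,
      -- (4) `z^(j)(0) = 0` for `j = 1, …, k-1`
      ∀ j : ℕ, 1 ≤ j → j < k → iteratedDeriv j z 0 = 0,
      -- (5) `(N₀* - conj z₀) ψ^(j)(0) = -j W ψ^(j-1)(0)` for `j = 1, …, k-1`
      ∀ j : ℕ, 1 ≤ j → j < k →
        (adjoint N₀ - (starRingEnd ℂ) z₀ • (1 : H →L[ℂ] H)) (iteratedDeriv j ψ 0) =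
          (-(j : ℂ)) • W (iteratedDeriv (j - 1) ψ 0) ].TFAE := by
  have h0B : (0:ℂ) ∈ Metric.ball (0:ℂ) ρ := Metric.mem_ball_self hρ
  have hψ0ne : ψ 0 ≠ 0 := fun h => hpair (by rw [h, inner_zero_left])
  -- N₀ (φ 0) = z₀ • φ 0
  have hNφ0 : N₀ (φ 0) = z₀ • φ 0 := by
    have := heig 0 h0B
    simpa [hz₀] using this
  have hWadj : adjoint W = W := by rw [← ContinuousLinearMap.star_eq_adjoint]; exact hW
  -- the conjugate eigen-equation for ψ
  have hψeq : ∀ w ∈ Metric.ball (0:ℂ) ρ,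
      (adjoint N₀) (ψ w) + w • W (ψ w)
        = (starRingEnd ℂ) (z ((starRingEnd ℂ) w)) • ψ w := by
    intro w hw
    have h := heigψ ((starRingEnd ℂ) w) (aux_conj_mem hw)
    rw [Complex.conj_conj] at h
    rw [map_add, map_smulₛₗ, hWadj, Complex.conj_conj] at h
    simpa using h
  have hψ0eig : adjoint N₀ (ψ 0) = (starRingEnd ℂ) z₀ • ψ 0 := by
    have := hψeq 0 h0B
    simpa [hz₀] using this
  -- recurrences at 0
  have Rφ0 : ∀ n : ℕ,
      N₀ (iteratedDeriv n φ 0) + (n:ℂ) • W (iteratedDeriv (n-1) φ 0)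
        = ∑ i ∈ Finset.range (n+1),
            (n.choose i : ℂ) • (iteratedDeriv i z 0 • iteratedDeriv (n-i) φ 0) := by
    intro n
    have := aux_rec N₀ W hz hφ
      (fun v hv => by simpa [ContinuousLinearMap.add_apply] using heig v hv) n 0 h0B
    simpa using this
  have hzsA : AnalyticOnNhd ℂ (fun w => (starRingEnd ℂ) (z ((starRingEnd ℂ) w)))
      (Metric.ball (0:ℂ) ρ) := aux_conj_analytic hz
  have hzs : ∀ n : ℕ,
      iteratedDeriv n (fun w => (starRingEnd ℂ) (z ((starRingEnd ℂ) w))) 0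
        = (starRingEnd ℂ) (iteratedDeriv n z 0) := by
    intro n
    have := aux_conj_iteratedDeriv hz n 0 h0B
    simpa using this
  have Rψ0 : ∀ n : ℕ,
      (adjoint N₀) (iteratedDeriv n ψ 0) + (n:ℂ) • W (iteratedDeriv (n-1) ψ 0)
        = ∑ i ∈ Finset.range (n+1),
            (n.choose i : ℂ) •
              ((starRingEnd ℂ) (iteratedDeriv i z 0) • iteratedDeriv (n-i) ψ 0) := by
    intro n
    have := aux_rec (adjoint N₀) W hzsA hψ hψeq n 0 h0B
    simp only [hzs] at this
    simpa using this
  tfae_have 4 → 5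
  | h4, j, hj1, hjk => by
    have hEq := Rψ0 j
    rw [aux_sum_single j _ _ (fun i hi1 hij => by
      rw [h4 i hi1 (lt_of_le_of_lt hij hjk), map_zero])] at hEq
    simp only [Nat.sub_zero, iteratedDeriv_zero, ← hz₀] at hEq
    have h' := eq_sub_of_add_eq hEq
    rw [ContinuousLinearMap.sub_apply, ContinuousLinearMap.smul_apply,
      ContinuousLinearMap.one_apply, h']
    module
  tfae_have 5 → 4
  | h5 => by
    intro j
    induction j using Nat.strong_induction_on with
    | _ j IH =>
      intro hj1 hjk
      have hEq := Rψ0 j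
      have h5j := h5 j hj1 hjk
      rw [ContinuousLinearMap.sub_apply, ContinuousLinearMap.smul_apply,
        ContinuousLinearMap.one_apply] at h5j
      have hL : (adjoint N₀) (iteratedDeriv j ψ 0) + (j:ℂ) • W (iteratedDeriv (j-1) ψ 0)
          = (starRingEnd ℂ) z₀ • iteratedDeriv j ψ 0 := by
        have := eq_add_of_sub_eq h5j
        rw [this]; module
      rw [hL, aux_sum_peel j hj1 _ _ (fun i hi1 hij => by
        rw [IH i hij hi1 (lt_trans hij hjk), map_zero])] at hEq
      simp only [Nat.sub_zero, Nat.sub_self, iteratedDeriv_zero, ← hz₀] at hEq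
      have : (starRingEnd ℂ) (iteratedDeriv j z 0) • ψ 0 = 0 := by
        have := hEq.symm
        rw [add_eq_left] at this
        exact this
      rcases smul_eq_zero.mp this with h | h
      · simpa using h
      · exact absurd h hψ0ne
  tfae_have 4 → 1
  | h4, j, hj, χ, hχ => by
    have hEq := Rφ0 (j+1)
    rw [aux_sum_single (j+1) _ _ (fun i hi1 hij => h4 i hi1 (by omega))] at hEq
    simp only [Nat.sub_zero, iteratedDeriv_zero, ← hz₀] at hEq
    have h' : ((j:ℂ)+1) • W (iteratedDeriv j φ 0)
        = z₀ • iteratedDeriv (j+1) φ 0 - N₀ (iteratedDeriv (j+1) φ 0) := by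
      have := eq_sub_of_add_eq hEq
      rw [this, Nat.add_sub_cancel]; push_cast; module
    have hinner : ⟪χ, ((j:ℂ)+1) • W (iteratedDeriv j φ 0)⟫_ℂ = 0 := by
      rw [h', inner_sub_right, inner_smul_right, ← ContinuousLinearMap.adjoint_inner_left,
        hχ, inner_smul_left, Complex.conj_conj, sub_self]
    rw [inner_smul_right] at hinner
    rcases mul_eq_zero.mp hinner with h | h
    · exact absurd h (Nat.cast_add_one_ne_zero j)
    · exact h
  tfae_have 1 → 4
  | h1 => by
    intro j
    induction j using Nat.strong_induction_on with
    | _ j IH =>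
      intro hj1 hjk
      have hEq := Rφ0 j
      rw [aux_sum_peel j hj1 _ _ (fun i hi1 hij => IH i hij hi1 (lt_trans hij hjk))] at hEq
      simp only [Nat.sub_zero, Nat.sub_self, iteratedDeriv_zero, ← hz₀] at hEq
      have hinner := congrArg (fun x => ⟪ψ 0, x⟫_ℂ) hEq
      simp only [inner_add_right, inner_smul_right] at hinner
      rw [← ContinuousLinearMap.adjoint_inner_left, hψ0eig, inner_smul_left,
        Complex.conj_conj] at hinner
      have hW0 : ⟪ψ 0, W (iteratedDeriv (j-1) φ 0)⟫_ℂ = 0 :=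
        h1 (j-1) (by omega) (ψ 0) hψ0eig
      rw [hW0, mul_zero, add_zero] at hinner
      have : iteratedDeriv j z 0 * ⟪ψ 0, φ 0⟫_ℂ = 0 := by
        rw [left_eq_add] at hinner
        exact hinner
      rcases mul_eq_zero.mp this with h | h
      · exact h
      · exact absurd h hpair
  tfae_have 4 → 3
  | h4, j, hj, χ, hχ => by
    have hEq := Rψ0 (j+1)
    rw [aux_sum_single (j+1) _ _ (fun i hi1 hij => by
      rw [h4 i hi1 (by omega), map_zero])] at hEq
    simp only [Nat.sub_zero, iteratedDeriv_zero, ← hz₀] at hEq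
    have h' : ((j:ℂ)+1) • W (iteratedDeriv j ψ 0)
        = (starRingEnd ℂ) z₀ • iteratedDeriv (j+1) ψ 0
          - (adjoint N₀) (iteratedDeriv (j+1) ψ 0) := by
      have := eq_sub_of_add_eq hEq
      rw [this, Nat.add_sub_cancel]; push_cast; module
    have hinner : ⟪((j:ℂ)+1) • W (iteratedDeriv j ψ 0), χ⟫_ℂ = 0 := by
      rw [h', inner_sub_left, inner_smul_left, ContinuousLinearMap.adjoint_inner_left,
        hχ, inner_smul_right, Complex.conj_conj, sub_self]
    rw [inner_smul_left] at hinner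
    rcases mul_eq_zero.mp hinner with h | h
    · exfalso
      have : ((j:ℂ)+1) ≠ 0 := Nat.cast_add_one_ne_zero j
      exact this (by simpa using congrArg (starRingEnd ℂ) h)
    · exact h
  tfae_have 3 → 2
  | h3 => ⟨φ 0, hNφ0, hpair, fun j hj => h3 j hj (φ 0) hNφ0⟩
  tfae_have 2 → 4
  | ⟨χ, hχeig, hχpair, hχorth⟩ => by
    intro j
    induction j using Nat.strong_induction_on with
    | _ j IH =>
      intro hj1 hjk
      have hEq := Rψ0 j
      rw [aux_sum_peel j hj1 _ _ (fun i hi1 hij => by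
        rw [IH i hij hi1 (lt_trans hij hjk), map_zero]),
        ] at hEq
      simp only [Nat.sub_zero, Nat.sub_self, iteratedDeriv_zero, ← hz₀] at hEq
      have hinner := congrArg (fun x => ⟪x, χ⟫_ℂ) hEq
      simp only [inner_add_left, inner_smul_left] at hinner
      rw [ContinuousLinearMap.adjoint_inner_left, hχeig, inner_smul_right] at hinner
      have hW0 : ⟪W (iteratedDeriv (j-1) ψ 0), χ⟫_ℂ = 0 := hχorth (j-1) (by omega)
      rw [hW0, mul_zero, add_zero, Complex.conj_conj] at hinner
      have : iteratedDeriv j z 0 * ⟪ψ 0, χ⟫_ℂ = 0 := by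
        rw [left_eq_add, Complex.conj_conj] at hinner
        exact hinner
      rcases mul_eq_zero.mp this with h | h
      · exact h
      · exact absurd h hχpair
  tfae_finish
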